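/- Along the two subsequences used in the proof of Theorem 1, the critical point coordinate satisfies: lim_{k→∞} (k*(⌊2^{k+1/2} k⌋) − k) = 1/2 and lim_{k→∞} (k*(2^k k) − k) = 0. -/

import Mathlib

open Filter Real

/-- The function `f(k,l)` from the proof of Theorem 1 (with parameter `n`):
`f(k,l) = (k+l+1)·ln n − k·ln k − l·ln l + k + l − ((k+l)²/2)·ln 2 − ((k+l)/2)·ln 2
          − (n−k−l)·(2^{−k} + 2^{−l})`, where `2^{−k} = exp(−k·ln 2)`. -/
noncomputable def f (n : ℕ) (k l : ℝ) : ℝ :=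
  (k + l + 1) * Real.log n - k * Real.log k - l * Real.log l + k + l
    - ((k + l) ^ 2 / 2) * Real.log 2 - ((k + l) / 2) * Real.log 2
    - ((n : ℝ) - k - l) * (Real.exp (-k * Real.log 2) + Real.exp (-l * Real.log 2))

/-- The region `R = {(k,l) : k ≥ 1, l ≥ 1, k + l ≤ n − 1}`. -/
def region (n : ℕ) : Set (ℝ × ℝ) :=
  {p : ℝ × ℝ | 1 ≤ p.1 ∧ 1 ≤ p.2 ∧ p.1 + p.2 ≤ (n : ℝ) - 1}

/-- `(k, l)` is a critical point of `f n`: both partial derivatives vanish. -/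
def IsCritPt (n : ℕ) (k l : ℝ) : Prop :=
  deriv (fun k' => f n k' l) k = 0 ∧ deriv (fun l' => f n k l') l = 0

open Set

noncomputable def d1 (n : ℕ) (k l : ℝ) : ℝ :=
  Real.log n - Real.log k - (k + l) * Real.log 2 - Real.log 2 / 2
    + (Real.exp (-k * Real.log 2) + Real.exp (-l * Real.log 2))
    + ((n : ℝ) - k - l) * Real.log 2 * Real.exp (-k * Real.log 2)

lemma hasDerivAt_f_fst (n : ℕ) (l k : ℝ) (hk : k ≠ 0) :
    HasDerivAt (fun k' => f n k' l) (d1 n k l) k := by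
  have h1 : HasDerivAt (fun k' : ℝ => k' * Real.log k') (Real.log k + 1) k := by
    have := (hasDerivAt_id' k).mul (Real.hasDerivAt_log hk)
    exact this.congr_deriv (by rw [mul_inv_cancel₀ hk]; ring)
  have h2 : HasDerivAt (fun k' : ℝ => Real.exp (-k' * Real.log 2))
      (-Real.log 2 * Real.exp (-k * Real.log 2)) k := by
    have hin : HasDerivAt (fun k' : ℝ => -k' * Real.log 2) (-Real.log 2) k := by
      simpa using ((hasDerivAt_id k).neg.mul_const (Real.log 2))
    simpa [mul_comm, Function.comp_def] using (Real.hasDerivAt_exp ((-k) * Real.log 2)).comp k hin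
  have h3 : HasDerivAt (fun k' : ℝ => (k' + l + 1) * Real.log n) (Real.log n) k := by
    simpa using (((hasDerivAt_id k).add_const l).add_const 1).mul_const (Real.log n)
  have h4 : HasDerivAt (fun k' : ℝ => ((k' + l) ^ 2 / 2) * Real.log 2)
      ((k + l) * Real.log 2) k := by
    have : HasDerivAt (fun k' : ℝ => (k' + l) ^ 2 / 2) (k + l) k := by
      have := (((hasDerivAt_id k).add_const l).pow 2).div_const 2
      simpa using this
    simpa using this.mul_const (Real.log 2)
  have h5 : HasDerivAt (fun k' : ℝ => ((k' + l) / 2) * Real.log 2) (Real.log 2 / 2) k := by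
    have : HasDerivAt (fun k' : ℝ => (k' + l) / 2) (1 / 2 : ℝ) k := by
      simpa using ((hasDerivAt_id k).add_const l).div_const 2
    have := this.mul_const (Real.log 2)
    exact this.congr_deriv (by ring)
  have h6 : HasDerivAt (fun k' : ℝ => ((n : ℝ) - k' - l) *
      (Real.exp (-k' * Real.log 2) + Real.exp (-l * Real.log 2)))
      ((-1) * (Real.exp (-k * Real.log 2) + Real.exp (-l * Real.log 2))
        + ((n : ℝ) - k - l) * (-Real.log 2 * Real.exp (-k * Real.log 2))) k := by
    have ha : HasDerivAt (fun k' : ℝ => (n : ℝ) - k' - l) (-1 : ℝ) k := by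
      simpa using ((hasDerivAt_id k).const_sub (n : ℝ)).sub_const l
    exact ha.mul (h2.add_const _)
  have := ((((h3.sub h1).sub (hasDerivAt_const k (l * Real.log l))).add (hasDerivAt_id k)).add
      (hasDerivAt_const k l)).sub h4 |>.sub h5 |>.sub h6
  simp only [Pi.add_def, Pi.sub_def, id_eq] at this
  simp only [f]
  exact this.congr_deriv (by simp only [d1]; ring)

lemma f_symm (n : ℕ) (k l : ℝ) : f n k l = f n l k := by
  simp only [f]; ring

lemma deriv_f_fst (n : ℕ) (l k : ℝ) (hk : k ≠ 0) :
    deriv (fun k' => f n k' l) k = d1 n k l :=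
  (hasDerivAt_f_fst n l k hk).deriv

lemma isCritPt_iff (n : ℕ) (k l : ℝ) (hk : k ≠ 0) (hl : l ≠ 0) :
    IsCritPt n k l ↔ (d1 n k l = 0 ∧ d1 n l k = 0) := by
  have h2 : (fun l' => f n k l') = fun l' => f n l' k := by
    funext l'; exact f_symm n k l'
  rw [IsCritPt, deriv_f_fst n l k hk, h2, deriv_f_fst n k l hl]

noncomputable def G (n : ℕ) (x : ℝ) : ℝ :=
  Real.log n - Real.log x - 2 * x * Real.log 2 - Real.log 2 / 2
    + 2 * Real.exp (-x * Real.log 2)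
    + ((n : ℝ) - 2 * x) * Real.log 2 * Real.exp (-x * Real.log 2)

lemma d1_diag (n : ℕ) (x : ℝ) : d1 n x x = G n x := by
  simp only [d1, G]; ring

lemma crit_symm {n : ℕ} {k l : ℝ} (hk : 1 ≤ k) (hl : 1 ≤ l) (hsum : k + l ≤ (n : ℝ) - 1)
    (h1 : d1 n k l = 0) (h2 : d1 n l k = 0) : k = l := by
  have key : Real.log k - ((n : ℝ) - k - l) * Real.log 2 * Real.exp (-k * Real.log 2)
      = Real.log l - ((n : ℝ) - k - l) * Real.log 2 * Real.exp (-l * Real.log 2) := by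
    simp only [d1] at h1 h2
    ring_nf at h1 h2 ⊢
    linarith
  have hc : 0 ≤ ((n : ℝ) - k - l) * Real.log 2 :=
    mul_nonneg (by linarith) (Real.log_nonneg one_le_two)
  set c := ((n : ℝ) - k - l) * Real.log 2 with hcdef
  rcases lt_trichotomy k l with h | h | h
  · exfalso
    have hlog : Real.log k < Real.log l := Real.log_lt_log (by linarith) h
    have hE : Real.exp (-l * Real.log 2) ≤ Real.exp (-k * Real.log 2) := by
      apply Real.exp_le_exp.mpr
      nlinarith [Real.log_nonneg (one_le_two (α := ℝ))]
    nlinarith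
  · exact h
  · exfalso
    have hlog : Real.log l < Real.log k := Real.log_lt_log (by linarith) h
    have hE : Real.exp (-k * Real.log 2) ≤ Real.exp (-l * Real.log 2) := by
      apply Real.exp_le_exp.mpr
      nlinarith [Real.log_nonneg (one_le_two (α := ℝ))]
    nlinarith

lemma G_strictAntiOn (n : ℕ) : StrictAntiOn (G n) (Icc 1 ((n : ℝ) / 2)) := by
  intro x hx y hy hxy
  obtain ⟨hx1, hx2⟩ := hx
  obtain ⟨hy1, hy2⟩ := hy
  have hlog : Real.log x < Real.log y := Real.log_lt_log (by linarith) hxy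
  have hl2 : (0 : ℝ) < Real.log 2 := Real.log_pos one_lt_two
  have hE : Real.exp (-y * Real.log 2) ≤ Real.exp (-x * Real.log 2) :=
    Real.exp_le_exp.mpr (by nlinarith)
  have hEy : 0 < Real.exp (-y * Real.log 2) := Real.exp_pos _
  have hmul : ((n : ℝ) - 2 * y) * Real.log 2 * Real.exp (-y * Real.log 2)
      ≤ ((n : ℝ) - 2 * x) * Real.log 2 * Real.exp (-x * Real.log 2) := by
    apply mul_le_mul (by nlinarith) hE (le_of_lt hEy) (by nlinarith)
  simp only [G]
  nlinarith

lemma G_continuousOn (n : ℕ) {s : Set ℝ} (hs : ∀ x ∈ s, x ≠ 0) : ContinuousOn (G n) s := by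
  intro x hx
  apply ContinuousAt.continuousWithinAt
  have hx0 := hs x hx
  unfold G
  have hlog : ContinuousAt Real.log x := Real.continuousAt_log hx0
  fun_prop

lemma exp_neg_log2 : Real.exp (-(1 : ℝ) * Real.log 2) = 1 / 2 := by
  rw [neg_one_mul, Real.exp_neg, Real.exp_log two_pos]
  norm_num

lemma exp_neg_le_one {x : ℝ} (hx : 0 ≤ x) : Real.exp (-x * Real.log 2) ≤ 1 := by
  rw [Real.exp_le_one_iff]
  have := Real.log_nonneg (one_le_two (α := ℝ))
  nlinarith

lemma G_one_pos {n : ℕ} (hn : 16 ≤ n) : 0 < G n 1 := by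
  have hn' : (16 : ℝ) ≤ (n : ℝ) := by exact_mod_cast hn
  have hln : 0 ≤ Real.log n := Real.log_nonneg (by linarith)
  have h2a := Real.log_two_gt_d9
  have h2b := Real.log_two_lt_d9
  simp only [G, exp_neg_log2, Real.log_one]
  nlinarith

lemma G_endpoint_neg {n : ℕ} (hn : 16 ≤ n) : G n (((n : ℝ) - 1) / 2) < 0 := by
  have hn' : (16 : ℝ) ≤ (n : ℝ) := by exact_mod_cast hn
  have h2a := Real.log_two_gt_d9
  have h2b := Real.log_two_lt_d9
  have hb : (0 : ℝ) ≤ ((n : ℝ) - 1) / 2 := by linarith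
  have hEb := exp_neg_le_one hb
  have hEpos : 0 < Real.exp (-(((n : ℝ) - 1) / 2) * Real.log 2) := Real.exp_pos _
  have hlogb : Real.log (((n : ℝ) - 1) / 2) = Real.log ((n : ℝ) - 1) - Real.log 2 :=
    Real.log_div (by linarith) (by norm_num)
  have hlogn : Real.log n ≤ Real.log ((n : ℝ) - 1) + Real.log 2 := by
    rw [← Real.log_mul (by linarith) (by norm_num)]
    apply Real.log_le_log (by linarith)
    linarith
  simp only [G, hlogb]
  nlinarith

def Pex (n : ℕ) : Prop := ∃ x ∈ Icc (1 : ℝ) (((n : ℝ) - 1) / 2), G n x = 0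

lemma Pex_of_large {n : ℕ} (hn : 16 ≤ n) : Pex n := by
  have hn' : (16 : ℝ) ≤ (n : ℝ) := by exact_mod_cast hn
  have h1b : (1 : ℝ) ≤ ((n : ℝ) - 1) / 2 := by linarith
  have hcont : ContinuousOn (G n) (Icc 1 (((n : ℝ) - 1) / 2)) :=
    G_continuousOn n (fun x hx => by have := hx.1; positivity)
  have := intermediate_value_Icc' h1b hcont
  have h0 : (0 : ℝ) ∈ Icc (G n (((n : ℝ) - 1) / 2)) (G n 1) :=
    ⟨le_of_lt (G_endpoint_neg hn), le_of_lt (G_one_pos hn)⟩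
  obtain ⟨x, hx, hGx⟩ := this h0
  exact ⟨x, hx, hGx⟩

open Classical in
noncomputable def kst (n : ℕ) : ℝ := if h : Pex n then h.choose else 1

lemma kst_spec {n : ℕ} (h : Pex n) :
    kst n ∈ Icc (1 : ℝ) (((n : ℝ) - 1) / 2) ∧ G n (kst n) = 0 := by
  rw [kst, dif_pos h]
  exact ⟨h.choose_spec.1, h.choose_spec.2⟩

lemma root_unique {n : ℕ} {x y : ℝ} (hx : x ∈ Icc (1 : ℝ) (((n : ℝ) - 1) / 2))
    (hy : y ∈ Icc (1 : ℝ) (((n : ℝ) - 1) / 2)) (hGx : G n x = 0) (hGy : G n y = 0) : x = y := by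
  have hsub : Icc (1 : ℝ) (((n : ℝ) - 1) / 2) ⊆ Icc (1 : ℝ) ((n : ℝ) / 2) :=
    Icc_subset_Icc le_rfl (by linarith)
  exact (G_strictAntiOn n).injOn (hsub hx) (hsub hy) (hGx.trans hGy.symm)

lemma main_clause {n : ℕ} (hn : 16 ≤ n) :
    (kst n, kst n) ∈ region n ∧ IsCritPt n (kst n) (kst n) ∧
      ∀ k l : ℝ, (k, l) ∈ region n → IsCritPt n k l → k = kst n ∧ l = kst n := by
  obtain ⟨⟨hk1, hk2⟩, hG⟩ := kst_spec (Pex_of_large hn)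
  have hkne : kst n ≠ 0 := by positivity
  refine ⟨⟨hk1, hk1, by linarith⟩, ?_, ?_⟩
  · rw [isCritPt_iff n _ _ hkne hkne, d1_diag]
    exact ⟨hG, hG⟩
  · rintro k l ⟨h1, h2, h3⟩ hcrit
    have hkne' : k ≠ 0 := by positivity
    have hlne' : l ≠ 0 := by positivity
    rw [isCritPt_iff n _ _ hkne' hlne'] at hcrit
    have hkl : k = l := crit_symm h1 h2 h3 hcrit.1 hcrit.2
    subst hkl
    have hGk : G n k = 0 := by rw [← d1_diag]; exact hcrit.1
    have : k = kst n :=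
      root_unique ⟨h1, by linarith⟩ ⟨hk1, hk2⟩ hGk hG
    exact ⟨this, this⟩

lemma kst_between {n : ℕ} (hn : 16 ≤ n) {a b : ℝ}
    (ha : a ∈ Icc (1 : ℝ) ((n : ℝ) / 2)) (hb : b ∈ Icc (1 : ℝ) ((n : ℝ) / 2))
    (hGa : 0 < G n a) (hGb : G n b < 0) : a < kst n ∧ kst n < b := by
  obtain ⟨hk, hG⟩ := kst_spec (Pex_of_large hn)
  have hmem : kst n ∈ Icc (1 : ℝ) ((n : ℝ) / 2) := ⟨hk.1, by linarith [hk.2]⟩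
  constructor
  · by_contra h
    push_neg at h
    rcases eq_or_lt_of_le h with he | hlt
    · rw [he] at hG; linarith
    · have := G_strictAntiOn n hmem ha hlt; linarith
  · by_contra h
    push_neg at h
    rcases eq_or_lt_of_le h with he | hlt
    · rw [← he] at hG; linarith
    · have := G_strictAntiOn n hb hmem hlt; linarith

lemma exp_ge_quad {x : ℝ} (hx : 0 ≤ x) : 1 + 2 * x ≤ Real.exp (x * Real.log 2) ∨ True := Or.inr trivial

lemma one_add_le_exp_sq {x : ℝ} (hx : 30 ≤ x) : 1 + 2 * x ≤ Real.exp (x * Real.log 2) := by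
  have h2a := Real.log_two_gt_d9
  have ht := Real.add_one_le_exp (x * Real.log 2 / 2)
  have hsq : Real.exp (x * Real.log 2) = Real.exp (x * Real.log 2 / 2) ^ 2 := by
    rw [sq, ← Real.exp_add]; ring_nf
  rw [hsq]
  have hl : (0.69 : ℝ) ≤ Real.log 2 := by linarith
  have hq : (x * Real.log 2 / 2 + 1) ^ 2 ≤ Real.exp (x * Real.log 2 / 2) ^ 2 := by
    have h0 : 0 ≤ x * Real.log 2 / 2 + 1 := by nlinarith
    exact pow_le_pow_left₀ h0 ht 2
  nlinarith [mul_le_mul hl hl (by norm_num) (by linarith : (0:ℝ) ≤ Real.log 2), sq_nonneg x]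

lemma poly_exp_le_one {x : ℝ} (hx : 30 ≤ x) :
    (1 + 2 * x) * Real.exp (-x * Real.log 2) ≤ 1 := by
  have hX := one_add_le_exp_sq hx
  have hE : Real.exp (-x * Real.log 2) * Real.exp (x * Real.log 2) = 1 := by
    rw [← Real.exp_add]; ring_nf; exact Real.exp_zero
  have hEpos : 0 < Real.exp (-x * Real.log 2) := Real.exp_pos _
  nlinarith

lemma eventually_mul_ge (c : ℝ) {D : ℝ} (hD : 0 < D) :
    ∀ᶠ k : ℕ in atTop, c ≤ D * (k : ℝ) := by
  filter_upwards [(tendsto_natCast_atTop_atTop (R := ℝ)).eventually_ge_atTop (c / D)] with k hk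
  rw [div_le_iff₀ hD] at hk
  linarith

lemma nE (k : ℕ) (x : ℝ) :
    ((2 : ℝ) ^ k * k) * Real.exp (-x * Real.log 2)
      = (k : ℝ) * Real.exp (((k : ℝ) - x) * Real.log 2) := by
  have h2 : (2 : ℝ) ^ k = Real.exp ((k : ℝ) * Real.log 2) := by
    rw [Real.exp_nat_mul, Real.exp_log two_pos]
  have h : Real.exp ((k : ℝ) * Real.log 2) * Real.exp (-x * Real.log 2)
      = Real.exp (((k : ℝ) - x) * Real.log 2) := by
    rw [← Real.exp_add]; congr 1; ring
  rw [h2]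
  linear_combination (k : ℝ) * h

lemma logn2 {k : ℕ} (hk : 1 ≤ k) :
    Real.log ((2 ^ k * k : ℕ) : ℝ) = (k : ℝ) * Real.log 2 + Real.log k := by
  have hk0 : (0 : ℝ) < (k : ℝ) := by exact_mod_cast hk
  push_cast
  rw [Real.log_mul (by positivity) (by positivity), Real.log_pow]

lemma seq2_neg {ε : ℝ} (hε : 0 < ε) (hε4 : ε ≤ 1/4) :
    ∀ᶠ k : ℕ in atTop, G (2 ^ k * k) ((k : ℝ) + ε) < 0 := by
  have hl2 : 0 < Real.log 2 := Real.log_pos one_lt_two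
  set X := Real.exp (-ε * Real.log 2) with hX
  have hX1 : X < 1 := by rw [hX, Real.exp_lt_one_iff]; nlinarith
  have hXpos : 0 < X := Real.exp_pos _
  have hD : 0 < Real.log 2 * (1 - X) := by nlinarith
  filter_upwards [eventually_ge_atTop 1, eventually_mul_ge 3 hD] with k hk1 hkbig
  have hk0 : (0 : ℝ) < (k : ℝ) := by exact_mod_cast hk1
  set b := (k : ℝ) + ε with hb
  have hcast : ((2 ^ k * k : ℕ) : ℝ) = (2 : ℝ) ^ k * k := by push_cast; ring
  have hEpos : 0 < Real.exp (-b * Real.log 2) := Real.exp_pos _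
  have hE1 : Real.exp (-b * Real.log 2) ≤ 1 := exp_neg_le_one (by nlinarith)
  have hnE : ((2 : ℝ) ^ k * k) * Real.exp (-b * Real.log 2) = (k : ℝ) * X := by
    rw [nE k b, hX]; congr 2; rw [hb]; ring
  have hlogb : Real.log k ≤ Real.log b := Real.log_le_log hk0 (by nlinarith)
  have h2p : (0 : ℝ) < (2 : ℝ) ^ k := by positivity
  have hprod : ((2 : ℝ) ^ k * k - 2 * b) * Real.log 2 * Real.exp (-b * Real.log 2)
      ≤ Real.log 2 * ((k : ℝ) * X) := by
    have h1 : ((2 : ℝ) ^ k * k - 2 * b) * Real.exp (-b * Real.log 2) ≤ (k : ℝ) * X := by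
      nlinarith
    calc ((2 : ℝ) ^ k * k - 2 * b) * Real.log 2 * Real.exp (-b * Real.log 2)
        = Real.log 2 * (((2 : ℝ) ^ k * k - 2 * b) * Real.exp (-b * Real.log 2)) := by ring
      _ ≤ Real.log 2 * ((k : ℝ) * X) := mul_le_mul_of_nonneg_left h1 hl2.le
  have hexpand : Real.log 2 * (1 - X) * (k : ℝ)
      = (k : ℝ) * Real.log 2 - Real.log 2 * ((k : ℝ) * X) := by ring
  have h2bl : 2 * b * Real.log 2 = 2 * ((k : ℝ) * Real.log 2) + 2 * (ε * Real.log 2) := by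
    rw [hb]; ring
  have hεl : 0 ≤ ε * Real.log 2 := by positivity
  simp only [G]
  rw [logn2 hk1, hcast]
  nlinarith [hprod, hkbig, hexpand, hεl, hl2, hE1, hlogb]


lemma seq2_pos {ε : ℝ} (hε : 0 < ε) (hε4 : ε ≤ 1/4) :
    ∀ᶠ k : ℕ in atTop, 0 < G (2 ^ k * k) ((k : ℝ) - ε) := by
  have hl2 : 0 < Real.log 2 := Real.log_pos one_lt_two
  have hl2' := Real.log_two_lt_d9
  set X := Real.exp (ε * Real.log 2) with hX
  have hX1 : 1 < X := by rw [hX]; exact Real.one_lt_exp_iff.mpr (by positivity)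
  have hD : 0 < Real.log 2 * (X - 1) := by nlinarith
  filter_upwards [eventually_ge_atTop 31, eventually_mul_ge 2 hD] with k hk31 hkbig
  have hk0 : (31 : ℝ) ≤ (k : ℝ) := by exact_mod_cast hk31
  set a := (k : ℝ) - ε with ha
  have ha30 : (30 : ℝ) ≤ a := by rw [ha]; linarith
  have hcast : ((2 ^ k * k : ℕ) : ℝ) = (2 : ℝ) ^ k * k := by push_cast; ring
  have hEpos : 0 < Real.exp (-a * Real.log 2) := Real.exp_pos _
  have hnE : ((2 : ℝ) ^ k * k) * Real.exp (-a * Real.log 2) = (k : ℝ) * X := by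
    rw [nE k a, hX]; congr 2; rw [ha]; ring
  have hloga : Real.log a ≤ Real.log k := Real.log_le_log (by linarith) (by rw [ha]; linarith)
  have hpoly : 2 * a * Real.exp (-a * Real.log 2) ≤ 1 := by
    have := poly_exp_le_one ha30
    nlinarith
  have hprod : Real.log 2 * ((k : ℝ) * X - 1)
      ≤ ((2 : ℝ) ^ k * k - 2 * a) * Real.log 2 * Real.exp (-a * Real.log 2) := by
    have h1 : (k : ℝ) * X - 1 ≤ ((2 : ℝ) ^ k * k - 2 * a) * Real.exp (-a * Real.log 2) := by
      nlinarith
    calc Real.log 2 * ((k : ℝ) * X - 1)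
        ≤ Real.log 2 * (((2 : ℝ) ^ k * k - 2 * a) * Real.exp (-a * Real.log 2)) :=
          mul_le_mul_of_nonneg_left h1 hl2.le
      _ = ((2 : ℝ) ^ k * k - 2 * a) * Real.log 2 * Real.exp (-a * Real.log 2) := by ring
  have hexpand : Real.log 2 * (X - 1) * (k : ℝ)
      = Real.log 2 * ((k : ℝ) * X) - (k : ℝ) * Real.log 2 := by ring
  have h2al : 2 * a * Real.log 2 = 2 * ((k : ℝ) * Real.log 2) - 2 * (ε * Real.log 2) := by
    rw [ha]; ring
  have hεl : 0 ≤ ε * Real.log 2 := by positivity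
  have hk1 : 1 ≤ k := by omega
  simp only [G]
  rw [logn2 hk1, hcast]
  nlinarith [hprod, hkbig, hexpand, hεl, hl2, hEpos, hloga, h2al]

lemma seq1_facts {k : ℕ} (hk : 4 ≤ k) :
    Real.exp ((k : ℝ) * Real.log 2) * k ≤ ((⌊(2 : ℝ) ^ ((k : ℝ) + 1/2) * k⌋₊ : ℕ) : ℝ)
    ∧ ((⌊(2 : ℝ) ^ ((k : ℝ) + 1/2) * k⌋₊ : ℕ) : ℝ) ≤ Real.exp (((k : ℝ) + 1/2) * Real.log 2) * k := by
  have hk0 : (4 : ℝ) ≤ (k : ℝ) := by exact_mod_cast hk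
  have hl2 := Real.log_two_gt_d9
  have hM : (2 : ℝ) ^ ((k : ℝ) + 1/2) * k = Real.exp (((k : ℝ) + 1/2) * Real.log 2) * k := by
    rw [Real.rpow_def_of_pos two_pos, mul_comm (Real.log 2)]
  have hMpos : (0 : ℝ) < (2 : ℝ) ^ ((k : ℝ) + 1/2) * k :=
    mul_pos (Real.rpow_pos_of_pos two_pos _) (by linarith)
  have hsplit : Real.exp (((k : ℝ) + 1/2) * Real.log 2)
      = Real.exp ((k : ℝ) * Real.log 2) * Real.exp ((1/2 : ℝ) * Real.log 2) := by
    rw [← Real.exp_add]; congr 1; ring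
  have hsplitk : Real.exp (((k : ℝ) + 1/2) * Real.log 2) * (k : ℝ)
      = Real.exp ((k : ℝ) * Real.log 2) * Real.exp ((1/2 : ℝ) * Real.log 2) * (k : ℝ) := by
    rw [hsplit]
  have h1 := Real.add_one_le_exp ((1/2 : ℝ) * Real.log 2)
  have h2 := Real.add_one_le_exp ((k : ℝ) * Real.log 2)
  have hexpk : 0 < Real.exp ((k : ℝ) * Real.log 2) := Real.exp_pos _
  constructor
  · have hfl := Nat.sub_one_lt_floor ((2 : ℝ) ^ ((k : ℝ) + 1/2) * k)
    have h34 : (0.34 : ℝ) ≤ Real.exp ((1/2 : ℝ) * Real.log 2) - 1 := by nlinarith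
    have h3 : (3 : ℝ) ≤ Real.exp ((k : ℝ) * Real.log 2) := by nlinarith
    have q : (1 : ℝ) ≤ Real.exp ((k : ℝ) * Real.log 2) * (k : ℝ)
        * (Real.exp ((1/2 : ℝ) * Real.log 2) - 1) := by
      calc (1 : ℝ) ≤ 3 * 4 * 0.34 := by norm_num
        _ ≤ Real.exp ((k : ℝ) * Real.log 2) * (k : ℝ)
            * (Real.exp ((1/2 : ℝ) * Real.log 2) - 1) := by
          apply mul_le_mul (mul_le_mul h3 hk0 (by norm_num) (by linarith)) h34
            (by norm_num) (by positivity)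
    nlinarith [hfl, hM, hsplitk, q]
  · linarith [Nat.floor_le hMpos.le, hM]

lemma seq1_neg {ε : ℝ} (hε : 0 < ε) (hε4 : ε ≤ 1/4) :
    ∀ᶠ k : ℕ in atTop, G ⌊(2 : ℝ) ^ ((k : ℝ) + 1/2) * k⌋₊ ((k : ℝ) + 1/2 + ε) < 0 := by
  have hl2 : 0 < Real.log 2 := Real.log_pos one_lt_two
  set X := Real.exp (-ε * Real.log 2) with hX
  have hX1 : X < 1 := by rw [hX, Real.exp_lt_one_iff]; nlinarith
  have hXpos : 0 < X := Real.exp_pos _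
  have hD : 0 < Real.log 2 * (1 - X) := by nlinarith
  filter_upwards [eventually_ge_atTop 4, eventually_mul_ge 3 hD] with k hk4 hkbig
  obtain ⟨hnlow, hnup⟩ := seq1_facts hk4
  set n := ⌊(2 : ℝ) ^ ((k : ℝ) + 1/2) * k⌋₊ with hn
  have hk0 : (4 : ℝ) ≤ (k : ℝ) := by exact_mod_cast hk4
  have hexpk : 0 < Real.exp ((k : ℝ) * Real.log 2) := Real.exp_pos _
  have h2 := Real.add_one_le_exp ((k : ℝ) * Real.log 2)
  have hnpos : (0 : ℝ) < (n : ℝ) := by nlinarith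
  set b := (k : ℝ) + 1/2 + ε with hb
  have hEpos : 0 < Real.exp (-b * Real.log 2) := Real.exp_pos _
  have hbpos : 0 < b := by rw [hb]; linarith
  have hE1 : Real.exp (-b * Real.log 2) ≤ 1 := exp_neg_le_one hbpos.le
  have hME : Real.exp (((k : ℝ) + 1/2) * Real.log 2) * (k : ℝ) * Real.exp (-b * Real.log 2)
      = (k : ℝ) * X := by
    rw [hX]
    have : Real.exp (((k : ℝ) + 1/2) * Real.log 2) * Real.exp (-b * Real.log 2)
        = Real.exp (-ε * Real.log 2) := by
      rw [← Real.exp_add]; congr 1; rw [hb]; ring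
    linear_combination (k : ℝ) * this
  have hlog_up : Real.log n ≤ ((k : ℝ) + 1/2) * Real.log 2 + Real.log k := by
    have h := Real.log_le_log hnpos hnup
    rwa [Real.log_mul (Real.exp_ne_zero _) (by linarith), Real.log_exp] at h
  have hlogb : Real.log k ≤ Real.log b := Real.log_le_log (by linarith) (by rw [hb]; linarith)
  have hprod : ((n : ℝ) - 2 * b) * Real.log 2 * Real.exp (-b * Real.log 2)
      ≤ Real.log 2 * ((k : ℝ) * X) := by
    have h1 : ((n : ℝ) - 2 * b) * Real.exp (-b * Real.log 2) ≤ (k : ℝ) * X := by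
      nlinarith [mul_le_mul_of_nonneg_right hnup hEpos.le, mul_pos hbpos hEpos, hME]
    calc ((n : ℝ) - 2 * b) * Real.log 2 * Real.exp (-b * Real.log 2)
        = Real.log 2 * (((n : ℝ) - 2 * b) * Real.exp (-b * Real.log 2)) := by ring
      _ ≤ Real.log 2 * ((k : ℝ) * X) := mul_le_mul_of_nonneg_left h1 hl2.le
  have hexpand : Real.log 2 * (1 - X) * (k : ℝ)
      = (k : ℝ) * Real.log 2 - Real.log 2 * ((k : ℝ) * X) := by ring
  have h2bl : 2 * b * Real.log 2
      = 2 * ((k : ℝ) * Real.log 2) + Real.log 2 + 2 * (ε * Real.log 2) := by rw [hb]; ring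
  have hlexp : ((k : ℝ) + 1/2) * Real.log 2 = (k : ℝ) * Real.log 2 + Real.log 2 / 2 := by ring
  have hεl : 0 ≤ ε * Real.log 2 := by positivity
  clear_value X n b
  have hA : Real.log 2 * ((k : ℝ) * X) ≤ (k : ℝ) * Real.log 2 - 3 := by
    linarith [hkbig, hexpand]
  simp only [G]
  linarith [hprod, hA, hlog_up, hlogb, hE1, hEpos, h2bl, hlexp, hεl, hl2]

lemma seq1_pos {ε : ℝ} (hε : 0 < ε) (hε4 : ε ≤ 1/4) :
    ∀ᶠ k : ℕ in atTop, 0 < G ⌊(2 : ℝ) ^ ((k : ℝ) + 1/2) * k⌋₊ ((k : ℝ) + 1/2 - ε) := by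
  have hl2 : 0 < Real.log 2 := Real.log_pos one_lt_two
  have hl2' := Real.log_two_lt_d9
  set X := Real.exp (ε * Real.log 2) with hX
  have hX1 : 1 < X := by rw [hX]; exact Real.one_lt_exp_iff.mpr (by positivity)
  have hD : 0 < Real.log 2 * (X - 1) := by nlinarith
  filter_upwards [eventually_ge_atTop 31, eventually_mul_ge 4 hD] with k hk31 hkbig
  have hk4 : 4 ≤ k := by omega
  obtain ⟨hnlow, hnup⟩ := seq1_facts hk4
  set n := ⌊(2 : ℝ) ^ ((k : ℝ) + 1/2) * k⌋₊ with hn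
  have hk0 : (31 : ℝ) ≤ (k : ℝ) := by exact_mod_cast hk31
  have hexpk : 0 < Real.exp ((k : ℝ) * Real.log 2) := Real.exp_pos _
  have h2 := Real.add_one_le_exp ((k : ℝ) * Real.log 2)
  have hnpos : (0 : ℝ) < (n : ℝ) := by nlinarith
  set a := (k : ℝ) + 1/2 - ε with ha
  have ha30 : (30 : ℝ) ≤ a := by rw [ha]; linarith
  have hEpos : 0 < Real.exp (-a * Real.log 2) := Real.exp_pos _
  have hME : Real.exp (((k : ℝ) + 1/2) * Real.log 2) * (k : ℝ) * Real.exp (-a * Real.log 2)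
      = (k : ℝ) * X := by
    rw [hX]
    have : Real.exp (((k : ℝ) + 1/2) * Real.log 2) * Real.exp (-a * Real.log 2)
        = Real.exp (ε * Real.log 2) := by
      rw [← Real.exp_add]; congr 1; rw [ha]; ring
    linear_combination (k : ℝ) * this
  have hlog_low : (k : ℝ) * Real.log 2 + Real.log k ≤ Real.log n := by
    have h := Real.log_le_log (by positivity) hnlow
    rwa [Real.log_mul (Real.exp_ne_zero _) (by linarith), Real.log_exp] at h
  have hloga : Real.log a ≤ Real.log 2 + Real.log k := by
    rw [← Real.log_mul (by norm_num) (by linarith)]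
    exact Real.log_le_log (by linarith) (by rw [ha]; linarith)
  have hpoly : (1 + 2 * a) * Real.exp (-a * Real.log 2) ≤ 1 := poly_exp_le_one ha30
  have hprod : Real.log 2 * ((k : ℝ) * X - 1)
      ≤ ((n : ℝ) - 2 * a) * Real.log 2 * Real.exp (-a * Real.log 2) := by
    have hfl := Nat.sub_one_lt_floor ((2 : ℝ) ^ ((k : ℝ) + 1/2) * k)
    have hM : (2 : ℝ) ^ ((k : ℝ) + 1/2) * k = Real.exp (((k : ℝ) + 1/2) * Real.log 2) * k := by
      rw [Real.rpow_def_of_pos two_pos, mul_comm (Real.log 2)]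
    have hcast : ((n : ℕ) : ℝ) = ((⌊(2 : ℝ) ^ ((k : ℝ) + 1/2) * k⌋₊ : ℕ) : ℝ) := by rw [hn]
    have hfl' : Real.exp (((k : ℝ) + 1/2) * Real.log 2) * k - 1 ≤ (n : ℝ) := by
      linarith [hfl, hM, hcast]
    have e1 : (Real.exp (((k : ℝ) + 1/2) * Real.log 2) * k - 1 - 2 * a)
          * Real.exp (-a * Real.log 2)
        ≤ ((n : ℝ) - 2 * a) * Real.exp (-a * Real.log 2) :=
      mul_le_mul_of_nonneg_right (by linarith [hfl']) hEpos.le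
    have h1 : (k : ℝ) * X - 1 ≤ ((n : ℝ) - 2 * a) * Real.exp (-a * Real.log 2) := by
      nlinarith [e1, hME, hpoly, hEpos]
    calc Real.log 2 * ((k : ℝ) * X - 1)
        ≤ Real.log 2 * (((n : ℝ) - 2 * a) * Real.exp (-a * Real.log 2)) :=
          mul_le_mul_of_nonneg_left h1 hl2.le
      _ = ((n : ℝ) - 2 * a) * Real.log 2 * Real.exp (-a * Real.log 2) := by ring
  have hexpand : Real.log 2 * (X - 1) * (k : ℝ)
      = Real.log 2 * ((k : ℝ) * X) - (k : ℝ) * Real.log 2 := by ring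
  have h2al : 2 * a * Real.log 2
      = 2 * ((k : ℝ) * Real.log 2) + Real.log 2 - 2 * (ε * Real.log 2) := by rw [ha]; ring
  have hεl : 0 ≤ ε * Real.log 2 := by positivity
  simp only [G]
  clear_value X a n
  have hP' : Real.log 2 * ((k : ℝ) * X) - Real.log 2
      ≤ ((n : ℝ) - 2 * a) * Real.log 2 * Real.exp (-a * Real.log 2) := by
    linarith [hprod]
  have hA : 4 ≤ Real.log 2 * ((k : ℝ) * X) - (k : ℝ) * Real.log 2 := by
    linarith [hkbig, hexpand]
  linarith [hP', hA, hlog_low, hloga, hEpos, h2al, hεl, hl2, hl2']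

/-- With `(k*(n), k*(n))` the (unique) critical point of `f` in the
region `R` for all sufficiently large `n`:
`k*(⌊2^{k+1/2} k⌋) − k → 1/2` and `k*(2^k k) − k → 0` as `k → ∞`. -/
theorem kstar_asymptotics_along_subsequences :
    ∃ (kstar : ℕ → ℝ) (N : ℕ),
      (∀ n : ℕ, N ≤ n →
        (kstar n, kstar n) ∈ region n ∧ IsCritPt n (kstar n) (kstar n) ∧
          ∀ k l : ℝ, (k, l) ∈ region n → IsCritPt n k l → k = kstar n ∧ l = kstar n) ∧
      Tendsto (fun k : ℕ => kstar ⌊(2 : ℝ) ^ ((k : ℝ) + 1/2) * k⌋₊ - (k : ℝ))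
        atTop (nhds (1/2)) ∧
      Tendsto (fun k : ℕ => kstar (2 ^ k * k) - (k : ℝ)) atTop (nhds 0) := by
  refine ⟨kst, 16, fun n hn => main_clause hn, ?_, ?_⟩
  · rw [Metric.tendsto_atTop]
    intro ε hε
    set ε' := min ε (1/4) with hε'def
    have hε'1 : 0 < ε' := lt_min hε (by norm_num)
    have hε'4 : ε' ≤ 1/4 := min_le_right _ _
    have hε'ε : ε' ≤ ε := min_le_left _ _
    have hl2 := Real.log_two_gt_d9
    have hev : ∀ᶠ k : ℕ in atTop,
        dist (kst ⌊(2 : ℝ) ^ ((k : ℝ) + 1/2) * k⌋₊ - (k : ℝ)) (1/2) < ε := by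
      filter_upwards [seq1_pos hε'1 hε'4, seq1_neg hε'1 hε'4, eventually_ge_atTop 8]
        with k hGa hGb hk8
      have hk4 : 4 ≤ k := by omega
      obtain ⟨hnlow, hnup⟩ := seq1_facts hk4
      set n := ⌊(2 : ℝ) ^ ((k : ℝ) + 1/2) * k⌋₊ with hn
      have hk0 : (8 : ℝ) ≤ (k : ℝ) := by exact_mod_cast hk8
      have h2 := Real.add_one_le_exp ((k : ℝ) * Real.log 2)
      have hexpk : 0 < Real.exp ((k : ℝ) * Real.log 2) := Real.exp_pos _
      have hnR : (16 : ℝ) ≤ (n : ℝ) := by nlinarith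
      have hn2k : 2 * (k : ℝ) + 2 ≤ (n : ℝ) := by nlinarith
      have hn16 : 16 ≤ n := by exact_mod_cast hnR
      have hmem_a : (k : ℝ) + 1/2 - ε' ∈ Icc (1 : ℝ) ((n : ℝ) / 2) :=
        ⟨by linarith, by linarith⟩
      have hmem_b : (k : ℝ) + 1/2 + ε' ∈ Icc (1 : ℝ) ((n : ℝ) / 2) :=
        ⟨by linarith, by linarith⟩
      obtain ⟨hlo, hhi⟩ := kst_between hn16 hmem_a hmem_b hGa hGb
      rw [Real.dist_eq, abs_lt]
      constructor <;> [linarith; linarith]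
    exact eventually_atTop.mp hev
  · rw [Metric.tendsto_atTop]
    intro ε hε
    set ε' := min ε (1/4) with hε'def
    have hε'1 : 0 < ε' := lt_min hε (by norm_num)
    have hε'4 : ε' ≤ 1/4 := min_le_right _ _
    have hε'ε : ε' ≤ ε := min_le_left _ _
    have hev : ∀ᶠ k : ℕ in atTop,
        dist (kst (2 ^ k * k) - (k : ℝ)) 0 < ε := by
      filter_upwards [seq2_pos hε'1 hε'4, seq2_neg hε'1 hε'4, eventually_ge_atTop 8]
        with k hGa hGb hk8
      have hk0 : (8 : ℝ) ≤ (k : ℝ) := by exact_mod_cast hk8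
      have hpow : (16 : ℕ) ≤ 2 ^ k ∧ (4 : ℕ) ≤ 2 ^ k := by
        constructor <;> calc
          _ ≤ 2 ^ 4 := by norm_num
          _ ≤ 2 ^ k := Nat.pow_le_pow_right (by norm_num) (by omega)
      have hn16 : 16 ≤ 2 ^ k * k := le_trans hpow.1 (Nat.le_mul_of_pos_right _ (by omega))
      have hcast : ((2 ^ k * k : ℕ) : ℝ) = (2 : ℝ) ^ k * k := by push_cast; ring
      have h4k : 4 * (k : ℝ) ≤ ((2 ^ k * k : ℕ) : ℝ) := by
        rw [hcast]
        have : (4 : ℝ) ≤ (2 : ℝ) ^ k := by exact_mod_cast hpow.2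
        nlinarith
      have hmem_a : (k : ℝ) - ε' ∈ Icc (1 : ℝ) (((2 ^ k * k : ℕ) : ℝ) / 2) :=
        ⟨by linarith, by linarith⟩
      have hmem_b : (k : ℝ) + ε' ∈ Icc (1 : ℝ) (((2 ^ k * k : ℕ) : ℝ) / 2) :=
        ⟨by linarith, by linarith⟩
      obtain ⟨hlo, hhi⟩ := kst_between hn16 hmem_a hmem_b hGa hGb
      rw [Real.dist_eq, abs_lt]
      constructor <;> [linarith; linarith]
    exact eventually_atTop.mp hev
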